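/- Let k ≥ 6 and let H be an n-vertex k-graph with δ_{k-2}(H) ≥ c·n² for some c > 0 and n sufficiently large (n ≥ n₀(k,c)). Then for every set S of k+2 vertices, the number of S-absorbing edges in H is at least c³·n^k/(2·k!). -/

import Mathlib

open Finset

section Aux
variable {α : Type} [DecidableEq α]

def Fset (E : Finset (Finset α)) (T B : Finset α) : Finset (Finset α) :=
  E.filter (fun e => T ⊆ e ∧ Disjoint e B)

lemma mem_Fset {E : Finset (Finset α)} {T B e : Finset α} :
    e ∈ Fset E T B ↔ e ∈ E ∧ T ⊆ e ∧ Disjoint e B := by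
  simp [Fset]

def Qset (E : Finset (Finset α)) (V S T₁ S₄ : Finset α) (k : ℕ) :
    Finset ((_ : Finset α) × (_ : Finset α) × (_ : Finset α) × Finset α) :=
  ((V \ S).powersetCard (k - 6)).sigma fun T' =>
    (Fset E T₁ (S₄ ∪ T')).sigma fun e₁ =>
      (Fset E (S₄ ∪ T') (T₁ ∪ e₁)).sigma fun e₂ =>
        Fset E ((e₁ \ S) ∪ (e₂ \ S)) ((S ∪ e₁ ∪ e₂) \ ((e₁ \ S) ∪ (e₂ \ S)))

lemma mem_Qset {E : Finset (Finset α)} {V S T₁ S₄ : Finset α} {k : ℕ}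
    {p : (_ : Finset α) × (_ : Finset α) × (_ : Finset α) × Finset α} :
    p ∈ Qset E V S T₁ S₄ k ↔ p.1 ∈ (V \ S).powersetCard (k-6) ∧
      p.2.1 ∈ Fset E T₁ (S₄ ∪ p.1) ∧ p.2.2.1 ∈ Fset E (S₄ ∪ p.1) (T₁ ∪ p.2.1) ∧
      p.2.2.2 ∈ Fset E ((p.2.1 \ S) ∪ (p.2.2.1 \ S))
        ((S ∪ p.2.1 ∪ p.2.2.1) \ ((p.2.1 \ S) ∪ (p.2.2.1 \ S))) := by
  obtain ⟨a, b, c, d⟩ := p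
  simp [Qset, mem_sigma, and_assoc]

lemma absorb_ext_count (k n : ℕ) (hk : 2 ≤ k) (c : ℝ)
    (V : Finset α) (E : Finset (Finset α))
    (hV : V.card = n) (hE : ∀ e ∈ E, e ⊆ V ∧ e.card = k)
    (hdeg : ∀ T ⊆ V, T.card = k - 2 → c * (n : ℝ) ^ 2 ≤ ((E.filter (fun e => T ⊆ e)).card : ℝ))
    (T B : Finset α) (hTV : T ⊆ V) (hTc : T.card = k - 2) (hTB : Disjoint T B) :
    c * (n : ℝ) ^ 2 - (B.card : ℝ) * n ≤ ((Fset E T B).card : ℝ) := by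
  classical
  have key : ∀ v ∈ B, (E.filter (fun e => T ⊆ e ∧ v ∈ e)).card ≤ n := by
    intro v hv
    have hvT : v ∉ T := fun h => (Finset.disjoint_left.mp hTB) h hv
    have : (E.filter (fun e => T ⊆ e ∧ v ∈ e)).card ≤ (V.powersetCard 1).card := by
      apply card_le_card_of_injOn (fun e => e \ insert v T)
      · intro e he
        simp only [mem_coe, mem_filter] at he
        obtain ⟨heE, hTe, hve⟩ := he
        obtain ⟨heV, hec⟩ := hE e heE
        have hsub : insert v T ⊆ e := insert_subset hve hTe
        rw [mem_coe, mem_powersetCard]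
        refine ⟨sdiff_subset.trans heV, ?_⟩
        rw [card_sdiff_of_subset hsub, hec, card_insert_of_notMem hvT, hTc]
        omega
      · intro e he f hf hef
        simp only [coe_filter, Set.mem_setOf_eq] at he hf
        have h1 : insert v T ⊆ e := insert_subset he.2.2 he.2.1
        have h2 : insert v T ⊆ f := insert_subset hf.2.2 hf.2.1
        dsimp only at hef
        rw [← sdiff_union_of_subset h1, ← sdiff_union_of_subset h2, hef]
    rwa [card_powersetCard, hV, Nat.choose_one_right] at this
  have hsplit : E.filter (fun e => T ⊆ e) ⊆
      (Fset E T B) ∪ B.biUnion (fun v => E.filter (fun e => T ⊆ e ∧ v ∈ e)) := by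
    intro e he
    simp only [mem_filter] at he
    by_cases hd : Disjoint e B
    · exact mem_union_left _ (mem_Fset.mpr ⟨he.1, he.2, hd⟩)
    · rw [Finset.not_disjoint_iff] at hd
      obtain ⟨v, hve, hvB⟩ := hd
      exact mem_union_right _ (mem_biUnion.mpr ⟨v, hvB, mem_filter.mpr ⟨he.1, he.2, hve⟩⟩)
  have hnat : (E.filter (fun e => T ⊆ e)).card ≤ (Fset E T B).card + B.card * n :=
    (card_le_card hsplit).trans ((card_union_le _ _).trans
      (by gcongr; exact card_biUnion_le_card_mul _ _ _ key))
  have hd := hdeg T hTV hTc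
  have : ((E.filter (fun e => T ⊆ e)).card : ℝ) ≤
      ((Fset E T B).card : ℝ) + (B.card : ℝ) * n := by exact_mod_cast hnat
  linarith

end Aux

set_option maxHeartbeats 2000000 in
open Classical in
theorem stmt_19 (k : ℕ) (hk : 6 ≤ k) (c : ℝ) (hc : 0 < c) :
    ∃ n₀ : ℕ, ∀ n : ℕ, n₀ ≤ n →
      ∀ (α : Type) (_ : DecidableEq α) (V : Finset α) (E : Finset (Finset α)),
        V.card = n →
        (∀ e ∈ E, e ⊆ V ∧ e.card = k) →
        (∀ T ⊆ V, T.card = k - 2 → c * (n : ℝ) ^ 2 ≤ ((E.filter (fun e => T ⊆ e)).card : ℝ)) →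
        ∀ S ⊆ V, S.card = k + 2 →
          c ^ 3 * (n : ℝ) ^ k / (2 * (k.factorial : ℝ)) ≤
            ((E.filter (fun e => Disjoint e S ∧
              ∃ e₁ ∈ E, ∃ e₂ ∈ E, Disjoint e₁ e₂ ∧
                (e₁ ∩ S).card = k - 2 ∧ (e₁ ∩ e).card = 2 ∧
                (e₂ ∩ S).card = 4 ∧ (e₂ ∩ e).card = k - 4)).card : ℝ) := by
  refine ⟨⌈(8 * (k:ℝ)^2) / c⌉₊ + 8*k^2 + 2*k + 2, ?_⟩
  intro n hn α _inst V E hV hE hdeg S hSV hS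
  classical
  have hkn : 8*k^2 + 2*k + 2 ≤ n := le_trans (by omega) hn
  have hcn : (8 * (k:ℝ)^2) ≤ c * n := by
    have h1 : ⌈(8 * (k:ℝ)^2) / c⌉₊ ≤ n := le_trans (by omega) hn
    have h2 : (8 * (k:ℝ)^2) / c ≤ n := (Nat.ceil_le.mp h1)
    calc (8 * (k:ℝ)^2) = ((8 * (k:ℝ)^2) / c) * c := by field_simp
    _ ≤ n * c := by apply mul_le_mul_of_nonneg_right h2 hc.le
    _ = c * n := mul_comm _ _
  have hk6 : (6:ℝ) ≤ (k:ℝ) := by exact_mod_cast hk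
  have hn8 : (8:ℝ) * (k:ℝ)^2 + 2*k + 2 ≤ (n:ℝ) := by exact_mod_cast hkn
  have hn0 : (0:ℝ) < n := by nlinarith
  -- split S into T₁ and S₄
  obtain ⟨T₁, hT₁S, hT₁c⟩ := exists_subset_card_eq (s := S) (n := k-2) (by rw [hS]; omega)
  obtain ⟨S₄, hS₄def⟩ : ∃ t, t = S \ T₁ := ⟨_, rfl⟩
  have hS₄c : S₄.card = 4 := by rw [hS₄def, card_sdiff_of_subset hT₁S, hS, hT₁c]; omega
  have hT₁S₄ : Disjoint T₁ S₄ := hS₄def ▸ disjoint_sdiff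
  have hTS : T₁ ∪ S₄ = S := hS₄def ▸ union_sdiff_of_subset hT₁S
  have hS₄S : S₄ ⊆ S := hS₄def ▸ sdiff_subset
  clear hS₄def
  -- real constants
  obtain ⟨D, hDdef⟩ : ∃ d : ℝ, d = c * (n:ℝ)^2 - (3*(k:ℝ)+2) * n := ⟨_, rfl⟩
  obtain ⟨u, hudef⟩ : ∃ v : ℝ, v = 1 - 1/(2*(k:ℝ)) := ⟨_, rfl⟩
  have hu0 : 0 ≤ u := by
    rw [hudef]
    have : 1/(2*(k:ℝ)) ≤ 1/12 := by
      apply div_le_div_of_nonneg_left <;> nlinarith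
    linarith
  have hD' : u * (c * (n:ℝ)^2) ≤ D := by
    rw [hudef, hDdef]
    clear hudef hDdef
    have hkpos : (0:ℝ) < 2*k := by linarith
    have h1 : (3*(k:ℝ)+2) * n ≤ (1/(2*(k:ℝ))) * (c * n^2) := by
      rw [div_mul_eq_mul_div, le_div_iff₀ hkpos]
      have h2 : c * (n:ℝ)^2 = (c*n) * n := by ring
      have h3 : (6*(k:ℝ)^2+4*k) * n ≤ 8*(k:ℝ)^2 * n := by nlinarith [mul_nonneg (show (0:ℝ) ≤ 2*(k:ℝ)^2-4*k by nlinarith) hn0.le]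
      nlinarith [mul_le_mul_of_nonneg_right hcn hn0.le, h3]
    nlinarith
  have hD0 : 0 ≤ D := le_trans (by positivity) hD'
  -- component facts
  have hT'facts : ∀ T' ∈ (V \ S).powersetCard (k-6), T' ⊆ V ∧ T'.card = k - 6 ∧ Disjoint T' S := by
    intro T' hT'
    rw [mem_powersetCard] at hT'
    refine ⟨hT'.1.trans sdiff_subset, hT'.2, ?_⟩
    rw [Finset.disjoint_left]
    intro x hx hxS
    exact (mem_sdiff.mp (hT'.1 hx)).2 hxS
  have hcomp : ∀ T' e₁ e₂ : Finset α, T' ∈ (V \ S).powersetCard (k-6) →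
      e₁ ∈ Fset E T₁ (S₄ ∪ T') → e₂ ∈ Fset E (S₄ ∪ T') (T₁ ∪ e₁) →
      e₁ ∈ E ∧ e₂ ∈ E ∧ e₁ ∩ S = T₁ ∧ e₂ ∩ S = S₄ ∧ (e₁ \ S).card = 2 ∧
        (e₂ \ S).card = k - 4 ∧ Disjoint e₁ e₂ ∧ T' ⊆ e₂ \ S := by
    intro T' e₁ e₂ hT' he₁ he₂
    obtain ⟨hT'V, hT'c, hT'S⟩ := hT'facts T' hT'
    rw [mem_Fset] at he₁ he₂
    obtain ⟨he₁E, hT₁e₁, hd₁⟩ := he₁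
    obtain ⟨he₂E, hSTe₂, hd₂⟩ := he₂
    have he₁S : e₁ ∩ S = T₁ := by
      apply subset_antisymm
      · intro x hx
        rw [mem_inter] at hx
        have hx2 := hx.2
        rw [← hTS, mem_union] at hx2
        rcases hx2 with h | h
        · exact h
        · exact absurd (mem_union_left _ h) (fun hh => (Finset.disjoint_left.mp hd₁) hx.1 hh)
      · exact subset_inter hT₁e₁ hT₁S
    have he₂S : e₂ ∩ S = S₄ := by
      apply subset_antisymm
      · intro x hx
        rw [mem_inter] at hx
        have hx2 := hx.2
        rw [← hTS, mem_union] at hx2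
        rcases hx2 with h | h
        · exact absurd h (Finset.disjoint_left.mp (disjoint_union_right.mp hd₂).1 hx.1)
        · exact h
      · exact subset_inter ((subset_union_left).trans hSTe₂) hS₄S
    have hc₁ := (hE e₁ he₁E).2
    have hc₂ := (hE e₂ he₂E).2
    have hsd₁ : (e₁ \ S).card = 2 := by
      have h := card_inter_add_card_sdiff e₁ S
      rw [he₁S, hT₁c, hc₁] at h
      omega
    have hsd₂ : (e₂ \ S).card = k - 4 := by
      have h := card_inter_add_card_sdiff e₂ S
      rw [he₂S, hS₄c, hc₂] at h
      omega
    exact ⟨he₁E, he₂E, he₁S, he₂S, hsd₁, hsd₂,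
      ((disjoint_union_right.mp hd₂).2).symm,
      subset_sdiff.mpr ⟨(subset_union_right).trans hSTe₂, hT'S⟩⟩
  have hefacts : ∀ e₁ e₂ e : Finset α, Disjoint e₁ e₂ →
      e ∈ Fset E ((e₁ \ S) ∪ (e₂ \ S)) ((S ∪ e₁ ∪ e₂) \ ((e₁ \ S) ∪ (e₂ \ S))) →
      e ∈ E ∧ Disjoint e S ∧ e ∩ e₁ = e₁ \ S ∧ e ∩ e₂ = e₂ \ S := by
    intro e₁ e₂ e hd₁₂ he
    rw [mem_Fset] at he
    obtain ⟨heE, hWe, heB⟩ := he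
    have hWS : ∀ x, x ∈ (e₁ \ S) ∪ (e₂ \ S) → x ∉ S := by
      intro x hx hxS
      rcases mem_union.mp hx with h | h
      · exact (mem_sdiff.mp h).2 hxS
      · exact (mem_sdiff.mp h).2 hxS
    have key : ∀ x ∈ e, x ∈ S ∪ e₁ ∪ e₂ → x ∈ (e₁ \ S) ∪ (e₂ \ S) := by
      intro x hxe hxU
      by_contra hxW
      exact (Finset.disjoint_left.mp heB) hxe (mem_sdiff.mpr ⟨hxU, hxW⟩)
    refine ⟨heE, ?_, ?_, ?_⟩
    · rw [Finset.disjoint_left]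
      intro x hxe hxS
      exact hWS x (key x hxe (mem_union_left _ (mem_union_left _ hxS))) hxS
    · apply subset_antisymm
      · intro x hx
        rw [mem_inter] at hx
        have hxW := key x hx.1 (mem_union_left _ (mem_union_right _ hx.2))
        rcases mem_union.mp hxW with h | h
        · exact h
        · exact absurd (mem_sdiff.mp h).1 (Finset.disjoint_left.mp hd₁₂ hx.2)
      · exact subset_inter ((subset_union_left).trans hWe) sdiff_subset
    · apply subset_antisymm
      · intro x hx
        rw [mem_inter] at hx
        have hxW := key x hx.1 (mem_union_right _ hx.2)
        rcases mem_union.mp hxW with h | h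
        · exact absurd hx.2 (Finset.disjoint_left.mp hd₁₂ (mem_sdiff.mp h).1)
        · exact h
      · exact subset_inter ((subset_union_right).trans hWe) sdiff_subset
  -- uniform lower bound on extension counts
  have hFbound : ∀ T B : Finset α, T ⊆ V → T.card = k-2 → Disjoint T B → B.card ≤ 3*k+2 →
      D ≤ ((Fset E T B).card : ℝ) := by
    intro T B h1 h2 h3 h4
    have h5 := absorb_ext_count k n (by omega) c V E hV hE hdeg T B h1 h2 h3
    have h6 : (B.card : ℝ) * n ≤ (3*(k:ℝ)+2) * n := by
      apply mul_le_mul_of_nonneg_right _ hn0.le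
      calc (B.card : ℝ) ≤ ((3*k+2 : ℕ) : ℝ) := Nat.cast_le.mpr h4
      _ = 3*(k:ℝ)+2 := by push_cast; ring
    rw [hDdef]
    linarith
  have hT₁V : T₁ ⊆ V := hT₁S.trans hSV
  have hF1 : ∀ T' ∈ (V \ S).powersetCard (k-6), D ≤ ((Fset E T₁ (S₄ ∪ T')).card : ℝ) := by
    intro T' hT'
    obtain ⟨hT'V, hT'c, hT'S⟩ := hT'facts T' hT'
    apply hFbound T₁ (S₄ ∪ T') hT₁V hT₁c
    · exact disjoint_union_right.mpr ⟨hT₁S₄, (hT'S.mono_right hT₁S).symm⟩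
    · calc (S₄ ∪ T').card ≤ S₄.card + T'.card := card_union_le _ _
      _ ≤ 3*k+2 := by rw [hS₄c, hT'c]; omega
  have hF2 : ∀ T' ∈ (V \ S).powersetCard (k-6), ∀ e₁ ∈ Fset E T₁ (S₄ ∪ T'),
      D ≤ ((Fset E (S₄ ∪ T') (T₁ ∪ e₁)).card : ℝ) := by
    intro T' hT' e₁ he₁
    obtain ⟨hT'V, hT'c, hT'S⟩ := hT'facts T' hT'
    rw [mem_Fset] at he₁
    obtain ⟨he₁E, hT₁e₁, hd₁⟩ := he₁
    apply hFbound
    · exact union_subset (hS₄S.trans hSV) hT'V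
    · rw [card_union_of_disjoint ((hT'S.mono_right hS₄S).symm)]
      rw [hS₄c, hT'c]; omega
    · refine disjoint_union_right.mpr ⟨?_, hd₁.symm⟩
      exact disjoint_union_left.mpr ⟨hT₁S₄.symm, hT'S.mono_right hT₁S⟩
    · calc (T₁ ∪ e₁).card ≤ T₁.card + e₁.card := card_union_le _ _
      _ ≤ 3*k+2 := by rw [hT₁c, (hE e₁ he₁E).2]; omega
  have hF3 : ∀ T' ∈ (V \ S).powersetCard (k-6), ∀ e₁ ∈ Fset E T₁ (S₄ ∪ T'),
      ∀ e₂ ∈ Fset E (S₄ ∪ T') (T₁ ∪ e₁),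
      D ≤ ((Fset E ((e₁ \ S) ∪ (e₂ \ S)) ((S ∪ e₁ ∪ e₂) \ ((e₁ \ S) ∪ (e₂ \ S)))).card : ℝ) := by
    intro T' hT' e₁ he₁ e₂ he₂
    obtain ⟨he₁E, he₂E, he₁S, he₂S, hsd₁, hsd₂, hd₁₂, hT'e₂⟩ := hcomp T' e₁ e₂ hT' he₁ he₂
    apply hFbound
    · exact union_subset (sdiff_subset.trans (hE e₁ he₁E).1) (sdiff_subset.trans (hE e₂ he₂E).1)
    · rw [card_union_of_disjoint (hd₁₂.mono sdiff_subset sdiff_subset), hsd₁, hsd₂]; omega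
    · exact disjoint_sdiff
    · calc ((S ∪ e₁ ∪ e₂) \ ((e₁ \ S) ∪ (e₂ \ S))).card ≤ (S ∪ e₁ ∪ e₂).card :=
          card_le_card sdiff_subset
      _ ≤ (S ∪ e₁).card + e₂.card := card_union_le _ _
      _ ≤ S.card + e₁.card + e₂.card := by
          have := card_union_le S e₁
          omega
      _ ≤ 3*k+2 := by rw [hS, (hE e₁ he₁E).2, (hE e₂ he₂E).2]; omega
  -- lower bound on the number of quadruples
  have hQsum : ((Qset E V S T₁ S₄ k).card : ℝ) = ∑ T' ∈ (V \ S).powersetCard (k-6),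
      ∑ e₁ ∈ Fset E T₁ (S₄ ∪ T'), ∑ e₂ ∈ Fset E (S₄ ∪ T') (T₁ ∪ e₁),
        ((Fset E ((e₁ \ S) ∪ (e₂ \ S)) ((S ∪ e₁ ∪ e₂) \ ((e₁ \ S) ∪ (e₂ \ S)))).card : ℝ) := by
    rw [show (Qset E V S T₁ S₄ k).card = ∑ T' ∈ (V \ S).powersetCard (k-6),
      ∑ e₁ ∈ Fset E T₁ (S₄ ∪ T'), ∑ e₂ ∈ Fset E (S₄ ∪ T') (T₁ ∪ e₁),
        (Fset E ((e₁ \ S) ∪ (e₂ \ S)) ((S ∪ e₁ ∪ e₂) \ ((e₁ \ S) ∪ (e₂ \ S)))).card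
      from by simp [Qset, card_sigma]]
    push_cast
    rfl
  have hQlb : ((((V \ S).powersetCard (k-6)).card : ℝ)) * D^3 ≤ ((Qset E V S T₁ S₄ k).card : ℝ) := by
    rw [hQsum]
    have step1 : ∀ T' ∈ (V \ S).powersetCard (k-6), D^3 ≤
        ∑ e₁ ∈ Fset E T₁ (S₄ ∪ T'), ∑ e₂ ∈ Fset E (S₄ ∪ T') (T₁ ∪ e₁),
          ((Fset E ((e₁ \ S) ∪ (e₂ \ S)) ((S ∪ e₁ ∪ e₂) \ ((e₁ \ S) ∪ (e₂ \ S)))).card : ℝ) := by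
      intro T' hT'
      have step2 : ∀ e₁ ∈ Fset E T₁ (S₄ ∪ T'), D^2 ≤
          ∑ e₂ ∈ Fset E (S₄ ∪ T') (T₁ ∪ e₁),
            ((Fset E ((e₁ \ S) ∪ (e₂ \ S)) ((S ∪ e₁ ∪ e₂) \ ((e₁ \ S) ∪ (e₂ \ S)))).card : ℝ) := by
        intro e₁ he₁
        have h := Finset.card_nsmul_le_sum (Fset E (S₄ ∪ T') (T₁ ∪ e₁))
          (fun e₂ => ((Fset E ((e₁ \ S) ∪ (e₂ \ S)) ((S ∪ e₁ ∪ e₂) \ ((e₁ \ S) ∪ (e₂ \ S)))).card : ℝ))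
          D (fun e₂ he₂ => hF3 T' hT' e₁ he₁ e₂ he₂)
        rw [nsmul_eq_mul] at h
        nlinarith [hF2 T' hT' e₁ he₁, hD0]
      have h := Finset.card_nsmul_le_sum (Fset E T₁ (S₄ ∪ T'))
        (fun e₁ => ∑ e₂ ∈ Fset E (S₄ ∪ T') (T₁ ∪ e₁),
          ((Fset E ((e₁ \ S) ∪ (e₂ \ S)) ((S ∪ e₁ ∪ e₂) \ ((e₁ \ S) ∪ (e₂ \ S)))).card : ℝ))
        (D^2) step2
      rw [nsmul_eq_mul] at h
      nlinarith [hF1 T' hT', hD0, sq_nonneg D]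
    have h := Finset.card_nsmul_le_sum ((V \ S).powersetCard (k-6))
      (fun T' => ∑ e₁ ∈ Fset E T₁ (S₄ ∪ T'), ∑ e₂ ∈ Fset E (S₄ ∪ T') (T₁ ∪ e₁),
        ((Fset E ((e₁ \ S) ∪ (e₂ \ S)) ((S ∪ e₁ ∪ e₂) \ ((e₁ \ S) ∪ (e₂ \ S)))).card : ℝ))
      (D^3) step1
    rw [nsmul_eq_mul] at h
    exact h
  -- fiber bound
  obtain ⟨M, hMdef⟩ : ∃ m, m = k.choose 2 * ((k-2).choose (k-4) * ((k-4).choose (k-6))) := ⟨_, rfl⟩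
  have hfiber : (Qset E V S T₁ S₄ k).card ≤ M * (E.filter (fun e => Disjoint e S ∧
      ∃ e₁ ∈ E, ∃ e₂ ∈ E, Disjoint e₁ e₂ ∧
        (e₁ ∩ S).card = k - 2 ∧ (e₁ ∩ e).card = 2 ∧
        (e₂ ∩ S).card = 4 ∧ (e₂ ∩ e).card = k - 4)).card := by
    apply Finset.card_le_mul_card_image_of_maps_to (f := fun p => p.2.2.2)
    · rintro ⟨T', e₁, e₂, e⟩ hp
      rw [mem_Qset] at hp
      obtain ⟨hT', he₁, he₂, he⟩ := hp
      obtain ⟨he₁E, he₂E, he₁S, he₂S, hsd₁, hsd₂, hd₁₂, hT'e₂⟩ := hcomp T' e₁ e₂ hT' he₁ he₂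
      obtain ⟨heE, heS, hee₁, hee₂⟩ := hefacts e₁ e₂ e hd₁₂ he
      rw [mem_filter]
      refine ⟨heE, heS, e₁, he₁E, e₂, he₂E, hd₁₂, ?_, ?_, ?_, ?_⟩
      · rw [he₁S]; exact hT₁c
      · rw [inter_comm e₁ e, hee₁]; exact hsd₁
      · rw [he₂S]; exact hS₄c
      · rw [inter_comm e₂ e, hee₂]; exact hsd₂
    · intro e heA
      have hek : e.card = k := (hE e (mem_filter.mp heA).1).2
      have hinj : (((Qset E V S T₁ S₄ k)).filter (fun p => p.2.2.2 = e)).card ≤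
          ((e.powersetCard 2).sigma (fun A => ((e \ A).powersetCard (k-4)).sigma
            (fun B => B.powersetCard (k-6)))).card := by
        apply card_le_card_of_injOn
          (fun p => (⟨p.2.1 \ S, p.2.2.1 \ S, p.1⟩ : (_ : Finset α) × (_ : Finset α) × Finset α))
        · rintro ⟨T', e₁, e₂, e'⟩ hp
          rw [mem_coe, mem_filter] at hp
          obtain ⟨hpQ, hpe⟩ := hp
          dsimp only at hpe
          subst hpe
          rw [mem_Qset] at hpQ
          obtain ⟨hT', he₁, he₂, he'⟩ := hpQ
          obtain ⟨he₁E, he₂E, he₁S, he₂S, hsd₁, hsd₂, hd₁₂, hT'e₂⟩ := hcomp T' e₁ e₂ hT' he₁ he₂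
          obtain ⟨heE, heS, hee₁, hee₂⟩ := hefacts e₁ e₂ e' hd₁₂ he'
          simp only [mem_coe, mem_sigma, mem_powersetCard]
          refine ⟨⟨?_, hsd₁⟩, ⟨?_, hsd₂⟩, hT'e₂, (mem_powersetCard.mp hT').2⟩
          · rw [← hee₁]; exact inter_subset_left
          · refine subset_sdiff.mpr ⟨?_, (hd₁₂.symm).mono sdiff_subset sdiff_subset⟩
            rw [← hee₂]; exact inter_subset_left
        · rintro ⟨T'p, e₁p, e₂p, ep⟩ hp ⟨T'q, e₁q, e₂q, eq'⟩ hq hg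
          simp only [coe_filter, Set.mem_setOf_eq] at hp hq
          obtain ⟨hpQ, hpe⟩ := hp
          obtain ⟨hqQ, hqe⟩ := hq
          rw [mem_Qset] at hpQ hqQ
          obtain ⟨hT'p, he₁p, he₂p, hep⟩ := hpQ
          obtain ⟨hT'q, he₁q, he₂q, heq⟩ := hqQ
          obtain ⟨_, _, he₁Sp, he₂Sp, _, _, _, _⟩ := hcomp _ _ _ hT'p he₁p he₂p
          obtain ⟨_, _, he₁Sq, he₂Sq, _, _, _, _⟩ := hcomp _ _ _ hT'q he₁q he₂q
          simp only [Sigma.mk.inj_iff, heq_eq_eq] at hg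
          obtain ⟨h1, h2, h3⟩ := hg
          have hE1 : e₁p = e₁q := by
            rw [← sdiff_union_inter e₁p S, ← sdiff_union_inter e₁q S, he₁Sp, he₁Sq, h1]
          have hE2 : e₂p = e₂q := by
            rw [← sdiff_union_inter e₂p S, ← sdiff_union_inter e₂q S, he₂Sp, he₂Sq, h2]
          have hEe : ep = eq' := by rw [hpe, hqe]
          subst h3; subst hE1; subst hE2; subst hEe; rfl
      have hcP : ((e.powersetCard 2).sigma (fun A => ((e \ A).powersetCard (k-4)).sigma
          (fun B => B.powersetCard (k-6)))).card = M := by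
        rw [card_sigma]
        calc ∑ A ∈ e.powersetCard 2,
              (((e \ A).powersetCard (k-4)).sigma fun B => B.powersetCard (k-6)).card
            = ∑ _A ∈ e.powersetCard 2, ((k-2).choose (k-4) * ((k-4).choose (k-6))) := by
              apply Finset.sum_congr rfl
              intro A hA
              rw [card_sigma]
              rw [mem_powersetCard] at hA
              calc ∑ B ∈ (e \ A).powersetCard (k-4), (B.powersetCard (k-6)).card
                  = ∑ B ∈ (e \ A).powersetCard (k-4), (k-4).choose (k-6) := by
                    apply Finset.sum_congr rfl
                    intro B hB
                    rw [mem_powersetCard] at hB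
                    rw [card_powersetCard, hB.2]
                _ = (k-2).choose (k-4) * ((k-4).choose (k-6)) := by
                    rw [sum_const, smul_eq_mul, card_powersetCard, card_sdiff_of_subset hA.1, hek, hA.2]
          _ = M := by rw [sum_const, smul_eq_mul, card_powersetCard, hek, hMdef]
      exact le_trans hinj (le_of_eq hcP)
  -- cardinality of the T' family
  have hVS : (V \ S).card = n - (k+2) := by rw [card_sdiff_of_subset hSV, hV, hS]
  obtain ⟨N, hNdef⟩ : ∃ N, N = (n - (k+2)).choose (k-6) := ⟨_, rfl⟩
  have hTscard : (((V \ S).powersetCard (k-6)).card) = N := by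
    rw [card_powersetCard, hVS, hNdef]
  -- Bernoulli
  have h2k : (0:ℝ) < 2*(k:ℝ) := by linarith
  have hupow : (1:ℝ)/2 ≤ u^(k-3) := by
    have hb := one_add_mul_le_pow
      (show (-2:ℝ) ≤ -(1/(2*(k:ℝ))) by
        have : (0:ℝ) < 1/(2*(k:ℝ)) := by positivity
        have : 1/(2*(k:ℝ)) ≤ 1 := by rw [div_le_one h2k]; linarith
        linarith) (k-3)
    have hcast : ((k-3 : ℕ):ℝ) ≤ (k:ℝ) := by exact_mod_cast Nat.sub_le k 3
    have hsmall : ((k-3:ℕ):ℝ) * (1/(2*(k:ℝ))) ≤ 1/2 := by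
      rw [mul_one_div, div_le_div_iff₀ h2k (by norm_num : (0:ℝ) < 2)]
      linarith
    have h12 : (1:ℝ)/2 ≤ 1 + ((k-3:ℕ):ℝ) * -(1/(2*(k:ℝ))) := by
      have : ((k-3:ℕ):ℝ) * -(1/(2*(k:ℝ))) = -(((k-3:ℕ):ℝ) * (1/(2*(k:ℝ)))) := by ring
      rw [this]
      linarith
    calc (1:ℝ)/2 ≤ 1 + ((k-3:ℕ):ℝ) * -(1/(2*(k:ℝ))) := h12
      _ ≤ (1 + -(1/(2*(k:ℝ))))^(k-3) := hb
      _ = u^(k-3) := by rw [hudef]; ring_nf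
  -- lower bound on N
  have hNlb : (u * n)^(k-6) ≤ ((k-6).factorial : ℝ) * N := by
    have hnat := Nat.pow_sub_le_descFactorial (n - (k+2)) (k-6)
    rw [Nat.descFactorial_eq_factorial_mul_choose, ← hNdef] at hnat
    have hkk : 8*(k*k) + 2*k + 2 ≤ n := by
      have : 8*k^2 = 8*(k*k) := by ring
      omega
    have h1 : n - (k+2) + 1 - (k-6) = n + 5 - 2*k := by omega
    rw [h1] at hnat
    have hnat' : (((n + 5 - 2*k)^(k-6) : ℕ) : ℝ) ≤ (((k-6).factorial * N : ℕ) : ℝ) :=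
      Nat.cast_le.mpr hnat
    push_cast [Nat.cast_sub (show 2*k ≤ n + 5 by omega)] at hnat'
    have hun : u * n ≤ (n:ℝ) + 5 - 2*k := by
      rw [hudef]
      have hinv : 1/(2*(k:ℝ)) * (2*(k:ℝ)) = 1 := by field_simp
      have hinv0 : (0:ℝ) ≤ 1/(2*(k:ℝ)) := by positivity
      have htn : 4*(k:ℝ) ≤ 1/(2*(k:ℝ)) * n := by
        nlinarith [mul_le_mul_of_nonneg_left hn8 hinv0]
      nlinarith
    have hun0 : (0:ℝ) ≤ u * n := mul_nonneg hu0 hn0.le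
    calc (u*n)^(k-6) ≤ ((n:ℝ)+5-2*(k:ℝ))^(k-6) := pow_le_pow_left₀ hun0 (by linarith) _
      _ ≤ ((k-6).factorial : ℝ) * N := by convert hnat' using 2
  -- factorial identity
  have hMfact : k.factorial = 8 * (M * (k-6).factorial) := by
    have c1 := Nat.choose_mul_factorial_mul_factorial (show 2 ≤ k by omega)
    have c2 := Nat.choose_mul_factorial_mul_factorial (show k-4 ≤ k-2 by omega)
    have c3 := Nat.choose_mul_factorial_mul_factorial (show k-6 ≤ k-4 by omega)
    rw [show (k-2)-(k-4) = 2 by omega] at c2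
    rw [show (k-4)-(k-6) = 2 by omega] at c3
    have h2f : (2:ℕ).factorial = 2 := rfl
    rw [hMdef, ← c1, ← c2, ← c3, h2f]
    ring
  -- assemble
  have hQM : ((Qset E V S T₁ S₄ k).card : ℝ) ≤ (M:ℝ) * ((E.filter (fun e => Disjoint e S ∧
      ∃ e₁ ∈ E, ∃ e₂ ∈ E, Disjoint e₁ e₂ ∧
        (e₁ ∩ S).card = k - 2 ∧ (e₁ ∩ e).card = 2 ∧
        (e₂ ∩ S).card = 4 ∧ (e₂ ∩ e).card = k - 4)).card : ℝ) := by
    exact_mod_cast hfiber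
  have hfac0 : (0:ℝ) < ((k-6).factorial : ℝ) := by exact_mod_cast Nat.factorial_pos _
  have hkey : (1/2) * (c^3 * (n:ℝ)^k) ≤
      ((k-6).factorial : ℝ) * ((((V \ S).powersetCard (k-6)).card : ℝ) * D^3) := by
    have hx : (u*(n:ℝ))^(k-6) * (u*(c*(n:ℝ)^2))^3 = u^(k-3) * (c^3 * (n:ℝ)^k) := by
      obtain ⟨j, hj⟩ : ∃ j, k - 6 = j := ⟨_, rfl⟩
      rw [hj, show k-3 = j+3 by omega, show k = j+6 by omega, pow_add, pow_add]
      ring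
    have hb1 : (u*(c*(n:ℝ)^2))^3 ≤ D^3 :=
      pow_le_pow_left₀ (by positivity) hD' 3
    calc (1/2) * (c^3*(n:ℝ)^k) ≤ u^(k-3) * (c^3*(n:ℝ)^k) :=
          mul_le_mul_of_nonneg_right hupow (by positivity)
      _ = (u*(n:ℝ))^(k-6) * (u*(c*(n:ℝ)^2))^3 := hx.symm
      _ ≤ (((k-6).factorial:ℝ) * N) * D^3 := by
          apply mul_le_mul hNlb hb1 (by positivity) (by positivity)
      _ = ((k-6).factorial : ℝ) * ((N:ℝ) * D^3) := by ring
      _ = ((k-6).factorial : ℝ) * ((((V \ S).powersetCard (k-6)).card : ℝ) * D^3) := by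
          rw [hTscard]
  have hfin : (1/2) * (c^3 * (n:ℝ)^k) ≤
      ((k-6).factorial : ℝ) * ((M:ℝ) * ((E.filter (fun e => Disjoint e S ∧
      ∃ e₁ ∈ E, ∃ e₂ ∈ E, Disjoint e₁ e₂ ∧
        (e₁ ∩ S).card = k - 2 ∧ (e₁ ∩ e).card = 2 ∧
        (e₂ ∩ S).card = 4 ∧ (e₂ ∩ e).card = k - 4)).card : ℝ)) := by
    refine le_trans hkey ?_
    apply mul_le_mul_of_nonneg_left (le_trans hQlb hQM) hfac0.le
  have hkfact : ((k.factorial : ℕ) : ℝ) = 8 * ((M:ℝ) * ((k-6).factorial : ℝ)) := by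
    exact_mod_cast hMfact
  rw [div_le_iff₀ (by positivity : (0:ℝ) < 2 * (k.factorial : ℝ))]
  have hpos : (0:ℝ) ≤ c^3 * (n:ℝ)^k := by positivity
  nlinarith [hfin, hkfact, hpos]
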